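/- Let G be a graph on V ∪ {t} whose edges are the union of a matching E_A on V ∪ {t} and a matching E_B on V, and let P be the path starting at the tap t. If S ⊆ V is a set of vertices such that (i) t is matched by E_A into S, (ii) within S exactly one vertex is E_A-unmatched or exactly one vertex is E_B-unmatched (consistently with |S| even or odd as in the garden-hose protocol), and (iii) no vertex of S is matched to a vertex outside S by either matching, then every vertex of P lies in S, and the vertices of S not on P decompose into vertex-disjoint cycles alternating between E_A and E_B edges. In particular |S| and the length of P have the same parity. -/

import Mathlib

/-- One step of the water's walk: on even steps Alice's matching (an involution
on `V ∪ {t}`, where `t = none`) is applied, on odd steps Bob's matching (an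
involution on `V`). A fixed point means the vertex is unmatched. -/
def ghStep {α : Type} (A : Option α → Option α) (B : α → α)
    (n : ℕ) (v : Option α) : Option α :=
  if n % 2 = 0 then A v else Option.map B v

/-- Position of the walk after `n` steps, starting at the tap `t = none`. -/
def ghWalk {α : Type} (A : Option α → Option α) (B : α → α) : ℕ → Option α
  | 0 => none
  | n + 1 => ghStep A B n (ghWalk A B n)

/-- Length of the path `P` starting at the tap: the first time the walk halts. -/
noncomputable def ghLen {α : Type} (A : Option α → Option α) (B : α → α) : ℕ :=
  sInf {n | ghStep A B n (ghWalk A B n) = ghWalk A B n}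

section aux
variable {α : Type} (A : Option α → Option α) (B : α → α)

lemma ghStep_invol (hA : Function.Involutive A) (hB : Function.Involutive B)
    (n : ℕ) : Function.Involutive (ghStep A B n) := by
  intro v
  unfold ghStep
  split_ifs
  · exact hA v
  · cases v <;> simp [hB _]

lemma ghStep_parity {m k : ℕ} (h : m % 2 = k % 2) :
    ghStep A B m = ghStep A B k := by
  funext v; unfold ghStep; rw [h]

lemma ghWalk_succ (n : ℕ) :
    ghWalk A B (n + 1) = ghStep A B n (ghWalk A B n) := rfl

lemma ghWalk_zero : ghWalk A B 0 = none := rfl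

lemma ghWalk_one : ghWalk A B 1 = A none := by
  simp [ghWalk, ghStep]

lemma ghWalk_inj (hA : Function.Involutive A) (hB : Function.Involutive B) :
    ∀ j, (∀ m < j, ghStep A B m (ghWalk A B m) ≠ ghWalk A B m) →
    ∀ i < j, ghWalk A B i ≠ ghWalk A B j := by
  intro j
  induction j using Nat.strong_induction_on with
  | _ j IH =>
    intro hH i hij heq
    have hstep := ghStep_invol A B hA hB
    obtain ⟨k, rfl⟩ := Nat.exists_eq_succ_of_ne_zero (by omega : j ≠ 0)
    by_cases hpar : i % 2 = (k + 1) % 2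
    · rcases Nat.eq_zero_or_pos i with rfl | hi
      · -- i = 0, j = k+1 even, so k odd
        have hk1 : ¬ k % 2 = 0 := by omega
        have hwk : ghWalk A B k = none := by
          have h1 : ghStep A B k (ghWalk A B k) = none := by
            rw [← ghWalk_succ, ← heq]; rfl
          rw [ghStep, if_neg hk1] at h1
          exact Option.map_eq_none_iff.mp h1
        exact IH k (by omega) (fun m hm => hH m (by omega)) 0 (by omega) hwk.symm
      · -- i ≥ 1, same parity
        obtain ⟨i', rfl⟩ := Nat.exists_eq_succ_of_ne_zero hi.ne'
        have hps : ghStep A B i' = ghStep A B k := ghStep_parity A B (by omega)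
        have heq' : ghWalk A B i' = ghWalk A B k := by
          have := congrArg (ghStep A B k) heq
          rw [ghWalk_succ, ghWalk_succ, ← hps] at this
          rw [← hstep i' (ghWalk A B i'), this, hps, hstep k (ghWalk A B k)]
        exact IH k (by omega) (fun m hm => hH m (by omega)) i' (by omega) heq'
    · rcases Nat.eq_zero_or_pos i with rfl | hi
      · -- i = 0, j = k+1 odd, so k even
        have hk0 : k % 2 = 0 := by omega
        have h1 : A (ghWalk A B k) = none := by
          have h2 : ghStep A B k (ghWalk A B k) = none := by
            rw [← ghWalk_succ, ← heq]; rfl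
          rwa [ghStep, if_pos hk0] at h2
        have hwk : ghWalk A B k = ghWalk A B 1 := by
          rw [ghWalk_one, ← h1, hA (ghWalk A B k)]
        rcases Nat.eq_zero_or_pos k with rfl | hk
        · -- k = 0 : step 0 is a fixed point
          refine hH 0 (by omega) ?_
          rw [ghWalk_zero] at h1 ⊢
          rw [ghStep, if_pos rfl]
          exact h1
        · have hk1 : 1 < k := by omega
          exact IH k (by omega) (fun m hm => hH m (by omega)) 1 hk1 hwk.symm
      · -- i ≥ 1, different parity
        by_cases hij' : i = k
        · -- j = i + 1 : step i fixed
          subst hij'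
          exact hH i (by omega) (by rw [← ghWalk_succ, ← heq])
        · have hik : i + 1 < k := by omega
          have hps : ghStep A B i = ghStep A B k := ghStep_parity A B (by omega)
          have heq' : ghWalk A B (i + 1) = ghWalk A B k := by
            rw [ghWalk_succ, heq, ghWalk_succ, hps, hstep k (ghWalk A B k)]
          exact IH k (by omega) (fun m hm => hH m (by omega)) (i + 1) hik heq'

end aux

/-- Let the edges on `V ∪ {t}` be the union of a matching `E_A` on `V ∪ {t}`
(the involution `A`, with `t = none`) and a matching `E_B` on `V` (the
involution `B`), and let `P` be the path starting at `t`. Suppose `S ⊆ V`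
satisfies: (i) `t` is matched by `E_A` into `S`; (iii) no vertex of `S` is
matched to a vertex outside `S` by either matching; and (ii) if `|S|` is even
then exactly one vertex of `S` is `E_A`-unmatched and every vertex of `S` is
`E_B`-matched, while if `|S|` is odd then every vertex of `S` is `E_A`-matched
and exactly one vertex of `S` is `E_B`-unmatched. Then the path `P` is finite,
every vertex of `P` (other than `t`) lies in `S`, the vertices of `S` not on
`P` are perfectly matched among themselves by both `E_A` and `E_B` (hence they
decompose into vertex-disjoint cycles alternating between `E_A`- and
`E_B`-edges), and in particular `|S|` and the length of `P` have the same
parity. -/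
theorem gardenhose_consistent_set {α : Type} [Fintype α] [DecidableEq α]
    (A : Option α → Option α) (B : α → α)
    (hA : Function.Involutive A) (hB : Function.Involutive B)
    (S : Finset α)
    (htap : ∃ a ∈ S, A none = some a)
    (hclA : ∀ a ∈ S, ∀ b : α, A (some a) = some b → b ∈ S)
    (hclB : ∀ a ∈ S, B a ∈ S)
    (hcons :
      if S.card % 2 = 0 then
        (∃! a : α, a ∈ S ∧ A (some a) = some a) ∧ ∀ a ∈ S, B a ≠ a
      else
        (∀ a ∈ S, A (some a) ≠ some a) ∧ ∃! a : α, a ∈ S ∧ B a = a) :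
    {n : ℕ | ghStep A B n (ghWalk A B n) = ghWalk A B n}.Nonempty ∧
    (∀ n : ℕ, 1 ≤ n → n ≤ ghLen A B → ∃ a ∈ S, ghWalk A B n = some a) ∧
    (∀ a ∈ S, (∀ n ≤ ghLen A B, ghWalk A B n ≠ some a) →
      A (some a) ≠ some a ∧ A (some a) ≠ none ∧ B a ≠ a ∧
      (∀ b : α, A (some a) = some b →
        b ∈ S ∧ ∀ n ≤ ghLen A B, ghWalk A B n ≠ some b) ∧
      (∀ n ≤ ghLen A B, ghWalk A B n ≠ some (B a))) ∧
    ghLen A B % 2 = S.card % 2 := by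
  obtain ⟨a₀, ha₀S, ha₀⟩ := htap
  -- nonemptiness of the halting set
  have hne : {n : ℕ | ghStep A B n (ghWalk A B n) = ghWalk A B n}.Nonempty := by
    by_contra h
    rw [Set.not_nonempty_iff_eq_empty] at h
    have hH : ∀ m, ghStep A B m (ghWalk A B m) ≠ ghWalk A B m := by
      intro m hm
      exact absurd hm (by simp [Set.eq_empty_iff_forall_notMem] at h; exact h m)
    have hinj : Function.Injective (ghWalk A B) := by
      intro i j hij
      rcases lt_trichotomy i j with h' | h' | h'
      · exact absurd hij (ghWalk_inj A B hA hB j (fun m _ => hH m) i h')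
      · exact h'
      · exact absurd hij.symm (ghWalk_inj A B hA hB i (fun m _ => hH m) j h')
    exact (Finite.exists_ne_map_eq_of_infinite (ghWalk A B)).elim
      (fun i hi => hi.elim (fun j hj => hj.1 (hinj hj.2)))
  set L := ghLen A B with hLdef
  have hLmem : ghStep A B L (ghWalk A B L) = ghWalk A B L := Nat.sInf_mem hne
  have hLmin : ∀ m < L, ghStep A B m (ghWalk A B m) ≠ ghWalk A B m := by
    intro m hm
    exact fun hc => Nat.notMem_of_lt_sInf hm hc
  have hL1 : 1 ≤ L := by
    rcases Nat.eq_zero_or_pos L with h0 | h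
    · exfalso
      rw [h0] at hLmem
      rw [ghWalk_zero, ghStep, if_pos rfl, ha₀] at hLmem
      exact Option.some_ne_none a₀ hLmem
    · exact h
  have hinjL : ∀ i j, i < j → j ≤ L → ghWalk A B i ≠ ghWalk A B j := by
    intro i j hij hjL
    exact ghWalk_inj A B hA hB j (fun m hm => hLmin m (by omega)) i hij
  -- part 2: the walk stays in S
  have hwalkS : ∀ n : ℕ, 1 ≤ n → n ≤ L → ∃ a ∈ S, ghWalk A B n = some a := by
    intro n
    induction n with
    | zero => omega
    | succ n IHn =>
      intro _ hnL
      rcases Nat.eq_zero_or_pos n with rfl | hn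
      · exact ⟨a₀, ha₀S, by rw [ghWalk_one, ha₀]⟩
      · obtain ⟨a, haS, hwa⟩ := IHn hn (by omega)
        rw [ghWalk_succ, hwa]
        by_cases hpar : n % 2 = 0
        · rw [ghStep, if_pos hpar]
          cases hAa : A (some a) with
          | none =>
            exfalso
            exact hinjL 0 (n + 1) (by omega) hnL
              (by rw [ghWalk_zero, ghWalk_succ, hwa, ghStep, if_pos hpar, hAa])
          | some b => exact ⟨b, hclA a haS b hAa, rfl⟩
        · rw [ghStep, if_neg hpar]
          exact ⟨B a, hclB a haS, rfl⟩
  -- the halting vertex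
  obtain ⟨aL, haLS, hwL⟩ := hwalkS L hL1 le_rfl
  have hhalt := hLmem
  rw [hwL] at hhalt
  -- parity
  have hparity : L % 2 = S.card % 2 := by
    by_cases hpar : L % 2 = 0
    · rw [ghStep, if_pos hpar] at hhalt
      by_cases hc : S.card % 2 = 0
      · omega
      · rw [if_neg hc] at hcons
        exact absurd hhalt (hcons.1 aL haLS)
    · rw [ghStep, if_neg hpar] at hhalt
      have hBfix : B aL = aL := by
        simpa using hhalt
      by_cases hc : S.card % 2 = 0
      · rw [if_pos hc] at hcons
        exact absurd hBfix (hcons.2 aL haLS)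
      · omega
  refine ⟨hne, hwalkS, ?_, hparity⟩
  intro a haS hun
  have hAfix : A (some a) ≠ some a := by
    intro hfix
    by_cases hc : S.card % 2 = 0
    · rw [if_pos hc] at hcons
      have hLpar : L % 2 = 0 := by omega
      rw [ghStep, if_pos hLpar] at hhalt
      obtain ⟨x, -, hxuniq⟩ := hcons.1
      have h1 : a = x := hxuniq a ⟨haS, hfix⟩
      have h2 : aL = x := hxuniq aL ⟨haLS, hhalt⟩
      exact hun L le_rfl (by rw [hwL, h1, h2])
    · rw [if_neg hc] at hcons
      exact hcons.1 a haS hfix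
  have hBfix : B a ≠ a := by
    intro hfix
    by_cases hc : S.card % 2 = 0
    · rw [if_pos hc] at hcons
      exact hcons.2 a haS hfix
    · rw [if_neg hc] at hcons
      have hLpar : ¬ L % 2 = 0 := by omega
      rw [ghStep, if_neg hLpar] at hhalt
      have hBL : B aL = aL := by simpa using hhalt
      obtain ⟨x, -, hxuniq⟩ := hcons.2
      have h1 : a = x := hxuniq a ⟨haS, hfix⟩
      have h2 : aL = x := hxuniq aL ⟨haLS, hBL⟩
      exact hun L le_rfl (by rw [hwL, h1, h2])
  have hAnone : A (some a) ≠ none := by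
    intro h
    have : some a = A none := by rw [← hA (some a), h]
    exact hun 1 hL1 (by rw [ghWalk_one, ← this])
  refine ⟨hAfix, hAnone, hBfix, ?_, ?_⟩
  · intro b hb
    refine ⟨hclA a haS b hb, ?_⟩
    intro n hnL hwb
    have hAb : A (some b) = some a := by rw [← hb, hA (some a)]
    rcases Nat.eq_zero_or_pos n with rfl | hn
    · rw [ghWalk_zero] at hwb; exact absurd hwb (by simp)
    by_cases hpar : n % 2 = 0
    · by_cases hnLeq : n = L
      · subst hnLeq
        have hba : some aL = some b := by rw [← hwL, hwb]
        rw [hba, ghStep, if_pos hpar, hAb] at hhalt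
        have hab : a = b := Option.some_injective α hhalt
        exact hAfix (by rw [hb, hab])
      · have : ghWalk A B (n + 1) = some a := by
          rw [ghWalk_succ, hwb, ghStep, if_pos hpar, hAb]
        exact hun (n + 1) (by omega) this
    · obtain ⟨m, rfl⟩ := Nat.exists_eq_succ_of_ne_zero hn.ne'
      have hm0 : m % 2 = 0 := by omega
      have : ghWalk A B m = some a := by
        rw [ghWalk_succ, ghStep, if_pos hm0] at hwb
        rw [← hA (ghWalk A B m), hwb, hAb]
      rcases Nat.eq_zero_or_pos m with rfl | hm
      · rw [ghWalk_zero] at this; exact absurd this (by simp)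
      · exact hun m (by omega) this
  · intro n hnL hwb
    rcases Nat.eq_zero_or_pos n with rfl | hn
    · rw [ghWalk_zero] at hwb; exact absurd hwb (by simp)
    by_cases hpar : n % 2 = 0
    · obtain ⟨m, rfl⟩ := Nat.exists_eq_succ_of_ne_zero hn.ne'
      have hm1 : ¬ m % 2 = 0 := by omega
      have : ghWalk A B m = some a := by
        rw [ghWalk_succ, ghStep, if_neg hm1] at hwb
        cases hwm : ghWalk A B m with
        | none => rw [hwm] at hwb; exact absurd hwb (by simp)
        | some c =>
          rw [hwm] at hwb
          simp only [Option.map_some] at hwb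
          have hc : B c = B a := Option.some_injective α hwb
          have : c = a := hB.injective hc
          rw [this]
      rcases Nat.eq_zero_or_pos m with rfl | hm
      · rw [ghWalk_zero] at this; exact absurd this (by simp)
      · exact hun m (by omega) this
    · by_cases hnLeq : n = L
      · subst hnLeq
        have hba : some aL = some (B a) := by rw [← hwL, hwb]
        rw [hba, ghStep, if_neg hpar] at hhalt
        simp only [Option.map_some] at hhalt
        have hBBa : B (B a) = B a := Option.some_injective α hhalt
        exact hBfix (hB.injective hBBa)
      · have : ghWalk A B (n + 1) = some a := by
          rw [ghWalk_succ, hwb, ghStep, if_neg hpar]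
          simp [hB a]
        exact hun (n + 1) (by omega) this
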